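/- arXiv:1901.01991 — 2 statements merged into one kernel-verified Lean document; each statement's English description precedes it below -/
import Mathlib

section
/- For every independent set I in the hypercube Q_d, at least one of I ∩ E, I ∩ O is small, i.e., |[I ∩ E]| ≤ 2^(d-2) or |[I ∩ O]| ≤ 2^(d-2). -/
/-- The `d`-dimensional hypercube graph. -/
def cubeGraph (d : ℕ) : SimpleGraph (Fin d → ZMod 2) where
  Adj x y := hammingDist x y = 1
  symm := ⟨fun x y (h : hammingDist x y = 1) => by rwa [hammingDist_comm]⟩
  loopless := ⟨fun x (h : hammingDist x x = 1) => by simp [hammingDist_self] at h⟩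

/-- An independent set: no two of its vertices are adjacent. -/
def IsIndep {V : Type*} (G : SimpleGraph V) (s : Set V) : Prop :=
  ∀ u ∈ s, ∀ v ∈ s, ¬ G.Adj u v

/-- The even bipartition class of the hypercube. -/
def evenSide (d : ℕ) : Set (Fin d → ZMod 2) := {v | ∑ i, v i = 0}

/-- The odd bipartition class of the hypercube. -/
def oddSideSet (d : ℕ) : Set (Fin d → ZMod 2) := {v | ∑ i, v i = 1}

/-- The neighbourhood of a set of vertices. -/
def nbhd {V : Type*} (G : SimpleGraph V) (A : Set V) : Set V := {y | ∃ a ∈ A, G.Adj a y}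

/-- The closure of `A` within a side `X`. -/
def closure' {V : Type*} (G : SimpleGraph V) (X A : Set V) : Set V :=
  {v ∈ X | G.neighborSet v ⊆ nbhd G A}

namespace OSS
variable {d : ℕ}

def flip (i0 : Fin d) (v : Fin d → ZMod 2) : Fin d → ZMod 2 :=
  Function.update v i0 (v i0 + 1)

lemma one_one : (1 : ZMod 2) + 1 = 0 := by decide

lemma flip_flip (i0 : Fin d) (v : Fin d → ZMod 2) : flip i0 (flip i0 v) = v := by
  funext j
  by_cases h : j = i0
  · subst h
    simp [flip, add_assoc, one_one]
  · simp [flip, Function.update_of_ne h]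

lemma flip_inj (i0 : Fin d) : Function.Injective (flip i0) :=
  Function.LeftInverse.injective (g := flip i0) (flip_flip i0)

lemma flip_adj (i0 : Fin d) (v : Fin d → ZMod 2) : (cubeGraph d).Adj v (flip i0 v) := by
  show hammingDist v (flip i0 v) = 1
  have h : ({i | v i ≠ flip i0 v i} : Finset (Fin d)) = {i0} := by
    ext j
    rw [Finset.mem_filter]
    simp only [Finset.mem_filter, Finset.mem_univ, true_and, Finset.mem_singleton, flip]
    by_cases h : j = i0
    · subst h
      simp only [Function.update_self, iff_true]
      intro hh
      rw [left_eq_add] at hh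
      exact one_ne_zero hh
    · simp [Function.update_of_ne h, h]
  rw [hammingDist, h, Finset.card_singleton]

lemma sum_flip (i0 : Fin d) (v : Fin d → ZMod 2) :
    ∑ i, flip i0 v i = (∑ i, v i) + 1 := by
  unfold flip
  rw [Finset.sum_update_of_mem (Finset.mem_univ i0),
    ← Finset.add_sum_erase Finset.univ v (Finset.mem_univ i0),
    Finset.sdiff_singleton_eq_erase]
  ring

lemma flip_even (i0 : Fin d) {v : Fin d → ZMod 2} (h : v ∈ evenSide d) :
    flip i0 v ∈ oddSideSet d := by
  simp only [evenSide, Set.mem_setOf_eq] at h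
  simp [oddSideSet, sum_flip, h]

lemma flip_odd (i0 : Fin d) {v : Fin d → ZMod 2} (h : v ∈ oddSideSet d) :
    flip i0 v ∈ evenSide d := by
  simp only [oddSideSet, Set.mem_setOf_eq] at h
  simp [evenSide, sum_flip, h, one_one]

lemma flip_image_even (i0 : Fin d) : flip i0 '' evenSide d = oddSideSet d := by
  ext w
  constructor
  · rintro ⟨v, hv, rfl⟩; exact flip_even i0 hv
  · intro hw
    exact ⟨flip i0 w, flip_odd i0 hw, flip_flip i0 w⟩

lemma even_union_odd : evenSide d ∪ oddSideSet d = Set.univ := by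
  ext v
  simp only [Set.mem_union, Set.mem_univ, iff_true, evenSide, oddSideSet, Set.mem_setOf_eq]
  have : ∀ a : ZMod 2, a = 0 ∨ a = 1 := by decide
  exact this _

lemma even_disj_odd : Disjoint (evenSide d) (oddSideSet d) := by
  rw [Set.disjoint_left]
  intro v hv hv'
  simp only [evenSide, oddSideSet, Set.mem_setOf_eq] at hv hv'
  rw [hv] at hv'
  exact one_ne_zero hv'.symm

lemma ncard_odd (hd : 2 ≤ d) : (oddSideSet d).ncard = 2 ^ (d - 1) := by
  have i0 : Fin d := ⟨0, by omega⟩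
  have h1 : (evenSide d).ncard = (oddSideSet d).ncard := by
    rw [← flip_image_even i0, Set.ncard_image_of_injective _ (flip_inj i0)]
  have h2 : (evenSide d).ncard + (oddSideSet d).ncard = 2 ^ d := by
    rw [← Set.ncard_union_eq even_disj_odd (Set.toFinite _) (Set.toFinite _),
      even_union_odd, Set.ncard_univ, Nat.card_eq_fintype_card]
    simp [Fintype.card_fun]
  have h3 : 2 ^ d = 2 * 2 ^ (d - 1) := by
    rw [← pow_succ']
    congr 1
    omega
  omega

lemma no_edge {I : Set (Fin d → ZMod 2)} (hI : IsIndep (cubeGraph d) I)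
    {X Y : Set (Fin d → ZMod 2)} {a b : Fin d → ZMod 2}
    (ha : a ∈ closure' (cubeGraph d) X (I ∩ X))
    (hb : b ∈ closure' (cubeGraph d) Y (I ∩ Y))
    (hab : (cubeGraph d).Adj a b) : False := by
  obtain ⟨-, ha2⟩ := ha
  obtain ⟨-, hb2⟩ := hb
  obtain ⟨x, hx, hxb⟩ := ha2 hab
  obtain ⟨y, hy, hyx⟩ := hb2 hxb.symm
  exact hI y hy.1 x hx.1 hyx

end OSS

/-- for every independent set `I` in `Q_d`, at least one of `I ∩ E`,
`I ∩ O` is small, i.e. has closure of size at most `2^(d-2)`. -/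
theorem one_side_small (d : ℕ) (I : Set (Fin d → ZMod 2))
    (hI : IsIndep (cubeGraph d) I) :
    (closure' (cubeGraph d) (evenSide d) (I ∩ evenSide d)).ncard ≤ 2 ^ (d - 2) ∨
    (closure' (cubeGraph d) (oddSideSet d) (I ∩ oddSideSet d)).ncard ≤ 2 ^ (d - 2) := by
  by_cases hd : 2 ≤ d
  · -- main case
    set A := closure' (cubeGraph d) (evenSide d) (I ∩ evenSide d) with hAdef
    set B := closure' (cubeGraph d) (oddSideSet d) (I ∩ oddSideSet d) with hBdef
    let i0 : Fin d := ⟨0, by omega⟩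
    have hAsub : OSS.flip i0 '' A ⊆ oddSideSet d := by
      rintro w ⟨a, ha, rfl⟩
      exact OSS.flip_even i0 ha.1
    have hBsub : B ⊆ oddSideSet d := fun b hb => hb.1
    have hdisj : Disjoint (OSS.flip i0 '' A) B := by
      rw [Set.disjoint_left]
      rintro w ⟨a, ha, rfl⟩ hw
      exact OSS.no_edge hI ha hw (OSS.flip_adj i0 a)
    have hsum : A.ncard + B.ncard ≤ 2 ^ (d - 1) := by
      rw [← Set.ncard_image_of_injective A (OSS.flip_inj i0),
        ← Set.ncard_union_eq hdisj (Set.toFinite _) (Set.toFinite _), ← OSS.ncard_odd hd]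
      exact Set.ncard_le_ncard (Set.union_subset hAsub hBsub) (Set.toFinite _)
    have h3 : 2 ^ (d - 1) = 2 * 2 ^ (d - 2) := by
      rw [← pow_succ']
      congr 1
      omega
    omega
  · -- small d : left side is at most 1, and 2^(d-2) = 1
    interval_cases d
    · left
      have h1 : (closure' (cubeGraph 0) (evenSide 0) (I ∩ evenSide 0)).ncard ≤
          (Set.univ : Set (Fin 0 → ZMod 2)).ncard :=
        Set.ncard_le_ncard (Set.subset_univ _) (Set.toFinite _)
      rw [Set.ncard_univ, Nat.card_eq_fintype_card] at h1
      simpa using h1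
    · left
      have hsub : (closure' (cubeGraph 1) (evenSide 1) (I ∩ evenSide 1)).Subsingleton := by
        intro v hv w hw
        have hv1 : ∑ i, v i = 0 := hv.1
        have hw1 : ∑ i, w i = 0 := hw.1
        rw [Fin.sum_univ_one] at hv1 hw1
        funext j
        have : j = 0 := Subsingleton.elim _ _
        rw [this, hv1, hw1]
      exact le_trans ((Set.ncard_le_one (Set.toFinite _)).mpr (fun a ha b hb => hsub ha hb)) (by norm_num)
end

section
/- (Isoperimetric inequality in the cube) There is a constant c > 0 such that for all sufficiently large d and every A ⊆ E with |A| ≤ 2^(d-2), one has (|N(A)| - |A|)/|N(A)| ≥ c/√d. -/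
namespace CubeIso

noncomputable section

open Real

/-- Flip coordinate `i`. -/
def flip {n : ℕ} (i : Fin n) (x : Fin n → ZMod 2) : Fin n → ZMod 2 :=
  Function.update x i (x i + 1)

/-- The isoperimetric weight function. -/
def J (t : ℝ) : ℝ := t * (1 - t) / 2

/-- One-sided discrete gradient, squared. -/
def grad2 {n : ℕ} (f : (Fin n → ZMod 2) → ℝ) (x : Fin n → ZMod 2) : ℝ :=
  ∑ i, (max (f (flip i x) - f x) 0 / 2) ^ 2

lemma grad2_nonneg {n : ℕ} (f : (Fin n → ZMod 2) → ℝ) (x : Fin n → ZMod 2) :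
    0 ≤ grad2 f x :=
  Finset.sum_nonneg fun _ _ => sq_nonneg _

lemma J_nonneg {t : ℝ} (h0 : 0 ≤ t) (h1 : t ≤ 1) : 0 ≤ J t := by
  have : 0 ≤ 1 - t := by linarith
  unfold J; positivity

/-- The two-point inequality for `J`. -/
lemma two_point {a b : ℝ} (ha0 : 0 ≤ a) (hab : a ≤ b) (hb1 : b ≤ 1) :
    2 * J ((a + b) / 2) ≤ Real.sqrt ((J a) ^ 2 + ((b - a) / 2) ^ 2) + J b := by
  have hP : (2 * J ((a + b) / 2) - J b) ^ 2 ≤ (J a) ^ 2 + ((b - a) / 2) ^ 2 := by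
    unfold J
    nlinarith [sq_nonneg (b - a), sq_nonneg (2 * a - 1), sq_nonneg ((b - a) * (2 * a - 1)),
      mul_nonneg (sub_nonneg.2 hab) (sub_nonneg.2 hab), sq_nonneg (b - a - 1),
      mul_nonneg (mul_nonneg (sub_nonneg.2 hab) (sub_nonneg.2 hab)) (sub_nonneg.2 hab)]
  have h1 := Real.sqrt_le_sqrt hP
  rw [Real.sqrt_sq_eq_abs] at h1
  have h2 := le_abs_self (2 * J ((a + b) / 2) - J b)
  linarith

/-- Two-dimensional Minkowski inequality. -/
lemma mink {p q g0 g1 : ℝ} (hp : 0 ≤ p) (hq : 0 ≤ q) (hg0 : 0 ≤ g0) (hg1 : 0 ≤ g1) :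
    Real.sqrt ((p + q) ^ 2 + (g0 + g1) ^ 2)
      ≤ Real.sqrt (p ^ 2 + g0 ^ 2) + Real.sqrt (q ^ 2 + g1 ^ 2) := by
  have hs0 : Real.sqrt (p ^ 2 + g0 ^ 2) ^ 2 = p ^ 2 + g0 ^ 2 := Real.sq_sqrt (by positivity)
  have hs1 : Real.sqrt (q ^ 2 + g1 ^ 2) ^ 2 = q ^ 2 + g1 ^ 2 := Real.sq_sqrt (by positivity)
  have hcs : p * q + g0 * g1 ≤ Real.sqrt (p ^ 2 + g0 ^ 2) * Real.sqrt (q ^ 2 + g1 ^ 2) := by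
    have h2 : (p * q + g0 * g1) ^ 2 ≤ (p ^ 2 + g0 ^ 2) * (q ^ 2 + g1 ^ 2) := by
      nlinarith [sq_nonneg (p * g1 - q * g0)]
    calc p * q + g0 * g1 ≤ Real.sqrt ((p * q + g0 * g1) ^ 2) := by
          rw [Real.sqrt_sq_eq_abs]; exact le_abs_self _
      _ ≤ Real.sqrt ((p ^ 2 + g0 ^ 2) * (q ^ 2 + g1 ^ 2)) := Real.sqrt_le_sqrt h2
      _ = _ := Real.sqrt_mul (by positivity) _
  have hfin : (p + q) ^ 2 + (g0 + g1) ^ 2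
      ≤ (Real.sqrt (p ^ 2 + g0 ^ 2) + Real.sqrt (q ^ 2 + g1 ^ 2)) ^ 2 := by
    nlinarith [hs0, hs1, hcs]
  calc Real.sqrt ((p + q) ^ 2 + (g0 + g1) ^ 2)
      ≤ Real.sqrt ((Real.sqrt (p ^ 2 + g0 ^ 2) + Real.sqrt (q ^ 2 + g1 ^ 2)) ^ 2) :=
        Real.sqrt_le_sqrt hfin
    _ = _ := Real.sqrt_sq (by positivity)

/-- The key pointwise inequality in the tensorization step. -/
lemma key {a b G0 G1 : ℝ} (ha0 : 0 ≤ a) (ha1 : a ≤ 1) (hb0 : 0 ≤ b) (hb1 : b ≤ 1)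
    (hG0 : 0 ≤ G0) (hG1 : 0 ≤ G1) :
    2 * Real.sqrt ((J ((a + b) / 2)) ^ 2 + ((Real.sqrt G0 + Real.sqrt G1) / 2) ^ 2)
      ≤ Real.sqrt ((J a) ^ 2 + ((max (b - a) 0 / 2) ^ 2 + G0))
        + Real.sqrt ((J b) ^ 2 + ((max (a - b) 0 / 2) ^ 2 + G1)) := by
  wlog hab : a ≤ b generalizing a b G0 G1
  · have h := this hb0 hb1 ha0 ha1 hG1 hG0 (le_of_not_ge hab)
    have e1 : (a + b) / 2 = (b + a) / 2 := by ring
    have e2 : (Real.sqrt G0 + Real.sqrt G1) / 2 = (Real.sqrt G1 + Real.sqrt G0) / 2 := by ring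
    rw [e1, e2]
    linarith
  have hmaxb : max (b - a) 0 = b - a := max_eq_left (by linarith)
  have hmaxa : max (a - b) 0 = 0 := max_eq_right (by linarith)
  rw [hmaxb, hmaxa]
  set p := Real.sqrt ((J a) ^ 2 + ((b - a) / 2) ^ 2) with hp
  have hpnn : 0 ≤ p := Real.sqrt_nonneg _
  have hp2 : p ^ 2 = (J a) ^ 2 + ((b - a) / 2) ^ 2 := Real.sq_sqrt (by positivity)
  have hg02 : Real.sqrt G0 ^ 2 = G0 := Real.sq_sqrt hG0
  have hg12 : Real.sqrt G1 ^ 2 = G1 := Real.sq_sqrt hG1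
  have hJb : 0 ≤ J b := J_nonneg hb0 hb1
  have hJm : 0 ≤ J ((a + b) / 2) := J_nonneg (by linarith) (by linarith)
  have e0 : (J a) ^ 2 + (((b - a) / 2) ^ 2 + G0) = p ^ 2 + Real.sqrt G0 ^ 2 := by
    rw [hp2, hg02]; ring
  have e1 : (J b) ^ 2 + ((0 / 2) ^ 2 + G1) = (J b) ^ 2 + Real.sqrt G1 ^ 2 := by
    rw [hg12]; ring
  rw [e0, e1]
  have hmk := mink hpnn hJb (Real.sqrt_nonneg G0) (Real.sqrt_nonneg G1)
  have htp := two_point ha0 hab hb1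
  have h2Jm : (2 * J ((a + b) / 2)) ^ 2 ≤ (p + J b) ^ 2 := by
    have h0 : 0 ≤ 2 * J ((a + b) / 2) := by linarith
    have : 2 * J ((a + b) / 2) ≤ p + J b := htp
    nlinarith
  have hmono : Real.sqrt ((2 * J ((a + b) / 2)) ^ 2 + (Real.sqrt G0 + Real.sqrt G1) ^ 2)
      ≤ Real.sqrt ((p + J b) ^ 2 + (Real.sqrt G0 + Real.sqrt G1) ^ 2) :=
    Real.sqrt_le_sqrt (by linarith)
  have hdouble : 2 * Real.sqrt ((J ((a + b) / 2)) ^ 2 + ((Real.sqrt G0 + Real.sqrt G1) / 2) ^ 2)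
      = Real.sqrt ((2 * J ((a + b) / 2)) ^ 2 + (Real.sqrt G0 + Real.sqrt G1) ^ 2) := by
    rw [show ((2 * J ((a + b) / 2)) ^ 2 + (Real.sqrt G0 + Real.sqrt G1) ^ 2)
        = 4 * ((J ((a + b) / 2)) ^ 2 + ((Real.sqrt G0 + Real.sqrt G1) / 2) ^ 2) by ring,
      show (4 : ℝ) = 2 ^ 2 by norm_num, Real.sqrt_mul (by positivity),
      Real.sqrt_sq (by norm_num : (0:ℝ) ≤ 2)]
  rw [hdouble]
  exact le_trans hmono hmk

/-- Flipping coordinate `0` of a `cons`. -/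
lemma flip_cons_zero {n : ℕ} (ε : ZMod 2) (x' : Fin n → ZMod 2) :
    flip (0 : Fin (n + 1)) (Fin.cons ε x') = Fin.cons (ε + 1) x' := by
  unfold flip
  rw [show (Fin.cons ε x' : Fin (n+1) → ZMod 2) 0 = ε from Fin.cons_zero _ _]
  exact Fin.update_cons_zero (α := fun _ => ZMod 2) ε x' (ε + 1)

/-- Flipping coordinate `i.succ` of a `cons`. -/
lemma flip_cons_succ {n : ℕ} (ε : ZMod 2) (x' : Fin n → ZMod 2) (i : Fin n) :
    flip (Fin.succ i) (Fin.cons ε x') = Fin.cons ε (flip i x') := by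
  unfold flip
  rw [show (Fin.cons ε x' : Fin (n+1) → ZMod 2) i.succ = x' i from Fin.cons_succ _ _ _]
  exact (Fin.cons_update (α := fun _ => ZMod 2) ε x' i (x' i + 1)).symm

/-- Splitting the gradient of `f` at `cons ε x'`. -/
lemma grad2_cons {n : ℕ} (f : (Fin (n + 1) → ZMod 2) → ℝ) (ε : ZMod 2) (x' : Fin n → ZMod 2) :
    grad2 f (Fin.cons ε x')
      = (max (f (Fin.cons (ε + 1) x') - f (Fin.cons ε x')) 0 / 2) ^ 2
        + grad2 (fun y => f (Fin.cons ε y)) x' := by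
  unfold grad2
  rw [Fin.sum_univ_succ, flip_cons_zero]
  congr 1
  refine Finset.sum_congr rfl fun i _ => ?_
  rw [flip_cons_succ]

/-- The gradient of an average is dominated. -/
lemma grad2_avg {n : ℕ} (f0 f1 : (Fin n → ZMod 2) → ℝ) (x' : Fin n → ZMod 2) :
    grad2 (fun y => (f0 y + f1 y) / 2) x'
      ≤ ((Real.sqrt (grad2 f0 x') + Real.sqrt (grad2 f1 x')) / 2) ^ 2 := by
  set u : Fin n → ℝ := fun i => max (f0 (flip i x') - f0 x') 0 / 2 with hu
  set v : Fin n → ℝ := fun i => max (f1 (flip i x') - f1 x') 0 / 2 with hv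
  have hunn : ∀ i, 0 ≤ u i := fun i => by positivity
  have hvnn : ∀ i, 0 ≤ v i := fun i => by positivity
  have hcomp : ∀ i : Fin n,
      (max ((f0 (flip i x') + f1 (flip i x')) / 2 - (f0 x' + f1 x') / 2) 0 / 2) ^ 2
        ≤ ((u i + v i) / 2) ^ 2 := by
    intro i
    have h1 : max ((f0 (flip i x') + f1 (flip i x')) / 2 - (f0 x' + f1 x') / 2) 0
        ≤ (max (f0 (flip i x') - f0 x') 0 + max (f1 (flip i x') - f1 x') 0) / 2 := by
      apply max_le
      · have := le_max_left (f0 (flip i x') - f0 x') 0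
        have := le_max_left (f1 (flip i x') - f1 x') 0
        linarith
      · have := le_max_right (f0 (flip i x') - f0 x') 0
        have := le_max_right (f1 (flip i x') - f1 x') 0
        linarith
    have h0 : (0:ℝ) ≤ max ((f0 (flip i x') + f1 (flip i x')) / 2 - (f0 x' + f1 x') / 2) 0 :=
      le_max_right _ _
    have h2 : max ((f0 (flip i x') + f1 (flip i x')) / 2 - (f0 x' + f1 x') / 2) 0 / 2
        ≤ (u i + v i) / 2 := by
      simp only [hu, hv]
      linarith
    have h3 : (0:ℝ) ≤ (u i + v i) / 2 := by
      have := hunn i; have := hvnn i; linarith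
    exact pow_le_pow_left₀ (by linarith) h2 2
  have hG0 : grad2 f0 x' = ∑ i, u i ^ 2 := rfl
  have hG1 : grad2 f1 x' = ∑ i, v i ^ 2 := rfl
  have hCS : ∑ i, u i * v i
      ≤ Real.sqrt (∑ i, u i ^ 2) * Real.sqrt (∑ i, v i ^ 2) := by
    have h2 : (∑ i, u i * v i) ^ 2 ≤ (∑ i, u i ^ 2) * ∑ i, v i ^ 2 :=
      Finset.sum_mul_sq_le_sq_mul_sq _ _ _
    calc ∑ i, u i * v i ≤ Real.sqrt ((∑ i, u i * v i) ^ 2) := by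
          rw [Real.sqrt_sq_eq_abs]; exact le_abs_self _
      _ ≤ Real.sqrt ((∑ i, u i ^ 2) * ∑ i, v i ^ 2) := Real.sqrt_le_sqrt h2
      _ = _ := Real.sqrt_mul (Finset.sum_nonneg fun i _ => sq_nonneg _) _
  have hs0 : Real.sqrt (∑ i, u i ^ 2) ^ 2 = ∑ i, u i ^ 2 :=
    Real.sq_sqrt (Finset.sum_nonneg fun i _ => sq_nonneg _)
  have hs1 : Real.sqrt (∑ i, v i ^ 2) ^ 2 = ∑ i, v i ^ 2 :=
    Real.sq_sqrt (Finset.sum_nonneg fun i _ => sq_nonneg _)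
  calc grad2 (fun y => (f0 y + f1 y) / 2) x'
      ≤ ∑ i, ((u i + v i) / 2) ^ 2 := Finset.sum_le_sum fun i _ => hcomp i
    _ = ((∑ i, u i ^ 2) + 2 * (∑ i, u i * v i) + ∑ i, v i ^ 2) / 4 := by
        rw [Finset.mul_sum, ← Finset.sum_add_distrib, ← Finset.sum_add_distrib, Finset.sum_div]
        refine Finset.sum_congr rfl fun i _ => ?_
        ring
    _ ≤ ((∑ i, u i ^ 2) + 2 * (Real.sqrt (∑ i, u i ^ 2) * Real.sqrt (∑ i, v i ^ 2))
          + ∑ i, v i ^ 2) / 4 := by linarith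
    _ = ((Real.sqrt (grad2 f0 x') + Real.sqrt (grad2 f1 x')) / 2) ^ 2 := by
        rw [hG0, hG1]
        linear_combination (-1/4 : ℝ) * hs0 + (-1/4 : ℝ) * hs1

/-- Summing a function over the cube by splitting off coordinate `0`. -/
lemma sum_cube_split {n : ℕ} (g : (Fin (n + 1) → ZMod 2) → ℝ) :
    ∑ x, g x = ∑ x' : Fin n → ZMod 2, (g (Fin.cons 0 x') + g (Fin.cons 1 x')) := by
  rw [← Equiv.sum_comp (Fin.consEquiv fun _ => ZMod 2) g, Fintype.sum_prod_type,
    show (Finset.univ : Finset (ZMod 2)) = {0, 1} by decide]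
  rw [Finset.sum_insert (by decide), Finset.sum_singleton, ← Finset.sum_add_distrib]
  rfl

/-- Bobkov-type one-sided functional inequality on the discrete cube. -/
theorem bobkov (n : ℕ) (f : (Fin n → ZMod 2) → ℝ) (hf : ∀ x, f x ∈ Set.Icc (0 : ℝ) 1) :
    (2 ^ n : ℝ) * J ((∑ x, f x) / 2 ^ n)
      ≤ ∑ x, Real.sqrt ((J (f x)) ^ 2 + grad2 f x) := by
  induction n with
  | zero =>
    rw [Fintype.sum_unique, Fintype.sum_unique]
    have h := hf default
    have hg : ∀ x : Fin 0 → ZMod 2, grad2 f x = 0 := fun x => by simp [grad2]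
    rw [hg, add_zero, Real.sqrt_sq (J_nonneg (hf _).1 (hf _).2)]
    simp
  | succ n ih =>
    set f0 : (Fin n → ZMod 2) → ℝ := fun x' => f (Fin.cons 0 x') with hf0
    set f1 : (Fin n → ZMod 2) → ℝ := fun x' => f (Fin.cons 1 x') with hf1
    set m : (Fin n → ZMod 2) → ℝ := fun x' => (f0 x' + f1 x') / 2 with hm
    have hmIcc : ∀ x', m x' ∈ Set.Icc (0 : ℝ) 1 := by
      intro x'
      have h0 := hf (Fin.cons 0 x')
      have h1 := hf (Fin.cons 1 x')
      exact ⟨by simp only [hm]; have := h0.1; have := h1.1; dsimp [f0, f1]; linarith,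
        by simp only [hm]; have := h0.2; have := h1.2; dsimp [f0, f1]; linarith⟩
    have hsumf : ∑ x, f x = 2 * ∑ x', m x' := by
      rw [sum_cube_split f, Finset.mul_sum]
      exact Finset.sum_congr rfl fun x' _ => by simp only [hm, hf0, hf1]; ring
    have havg : (∑ x, f x) / 2 ^ (n + 1) = (∑ x', m x') / 2 ^ n := by
      rw [hsumf]; ring
    have hpt : ∀ x' : Fin n → ZMod 2,
        2 * Real.sqrt ((J (m x')) ^ 2 + grad2 m x')
          ≤ Real.sqrt ((J (f (Fin.cons 0 x'))) ^ 2 + grad2 f (Fin.cons 0 x'))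
            + Real.sqrt ((J (f (Fin.cons 1 x'))) ^ 2 + grad2 f (Fin.cons 1 x')) := by
      intro x'
      have h0 := hf (Fin.cons 0 x')
      have h1 := hf (Fin.cons 1 x')
      have hK := key (a := f0 x') (b := f1 x') (G0 := grad2 f0 x') (G1 := grad2 f1 x')
        h0.1 h0.2 h1.1 h1.2 (grad2_nonneg _ _) (grad2_nonneg _ _)
      have hg0 : grad2 f (Fin.cons 0 x')
          = (max (f1 x' - f0 x') 0 / 2) ^ 2 + grad2 f0 x' := by
        have := grad2_cons f 0 x'
        rwa [show (0 : ZMod 2) + 1 = 1 by decide] at this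
      have hg1 : grad2 f (Fin.cons 1 x')
          = (max (f0 x' - f1 x') 0 / 2) ^ 2 + grad2 f1 x' := by
        have := grad2_cons f 1 x'
        rwa [show (1 : ZMod 2) + 1 = 0 by decide] at this
      rw [hg0, hg1]
      have hgm : grad2 m x'
          ≤ ((Real.sqrt (grad2 f0 x') + Real.sqrt (grad2 f1 x')) / 2) ^ 2 :=
        grad2_avg f0 f1 x'
      have hmono : Real.sqrt ((J (m x')) ^ 2 + grad2 m x')
          ≤ Real.sqrt ((J (m x')) ^ 2
              + ((Real.sqrt (grad2 f0 x') + Real.sqrt (grad2 f1 x')) / 2) ^ 2) :=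
        Real.sqrt_le_sqrt (by linarith)
      calc 2 * Real.sqrt ((J (m x')) ^ 2 + grad2 m x')
          ≤ 2 * Real.sqrt ((J ((f0 x' + f1 x') / 2)) ^ 2
              + ((Real.sqrt (grad2 f0 x') + Real.sqrt (grad2 f1 x')) / 2) ^ 2) := by
            simp only [hm] at hmono ⊢; linarith
        _ ≤ _ := hK
    calc (2 ^ (n + 1) : ℝ) * J ((∑ x, f x) / 2 ^ (n + 1))
        = 2 * ((2 ^ n : ℝ) * J ((∑ x', m x') / 2 ^ n)) := by rw [havg]; ring
      _ ≤ 2 * ∑ x', Real.sqrt ((J (m x')) ^ 2 + grad2 m x') := by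
          have := ih m hmIcc
          linarith
      _ = ∑ x', 2 * Real.sqrt ((J (m x')) ^ 2 + grad2 m x') := by
          rw [Finset.mul_sum]
      _ ≤ ∑ x' : Fin n → ZMod 2,
            (Real.sqrt ((J (f (Fin.cons 0 x'))) ^ 2 + grad2 f (Fin.cons 0 x'))
              + Real.sqrt ((J (f (Fin.cons 1 x'))) ^ 2 + grad2 f (Fin.cons 1 x'))) :=
          Finset.sum_le_sum fun x' _ => hpt x'
      _ = ∑ x, Real.sqrt ((J (f x)) ^ 2 + grad2 f x) :=
          (sum_cube_split (fun x => Real.sqrt ((J (f x)) ^ 2 + grad2 f x))).symm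

/-- Boundary bound from the Bobkov inequality, for indicators. -/
theorem boundary_bound (n : ℕ) (S : Finset (Fin n → ZMod 2))
    (hcard : (S.card : ℝ) ≤ 2 ^ n / 2) :
    (S.card : ℝ) ≤ 2 * Real.sqrt n
      * (Finset.univ.filter (fun x => x ∉ S ∧ ∃ i, flip i x ∈ S)).card := by
  classical
  set f : (Fin n → ZMod 2) → ℝ := fun x => if x ∈ S then 1 else 0 with hfdef
  have hf : ∀ x, f x ∈ Set.Icc (0 : ℝ) 1 := by
    intro x; simp only [hfdef]; split <;> norm_num
  have hJf : ∀ x, J (f x) = 0 := by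
    intro x; simp only [hfdef]; split <;> (unfold J; norm_num)
  have hsum : ∑ x, f x = S.card := by
    simp only [hfdef]
    rw [Finset.sum_boole]
    congr 2
    ext x
    simp
  have hbob := bobkov n f hf
  have hterm : ∀ x, Real.sqrt ((J (f x)) ^ 2 + grad2 f x)
      ≤ if x ∉ S ∧ ∃ i, flip i x ∈ S then Real.sqrt n / 2 else 0 := by
    intro x
    by_cases hx : x ∉ S ∧ ∃ i, flip i x ∈ S
    · rw [if_pos hx, hJf]
      have hg : grad2 f x ≤ (n : ℝ) / 4 := by
        unfold grad2
        calc ∑ i, (max (f (flip i x) - f x) 0 / 2) ^ 2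
            ≤ ∑ _i : Fin n, ((1 : ℝ) / 2) ^ 2 := by
              refine Finset.sum_le_sum fun i _ => ?_
              have h1 := hf (flip i x)
              have h2 := hf x
              have hle : max (f (flip i x) - f x) 0 / 2 ≤ 1 / 2 := by
                have : max (f (flip i x) - f x) 0 ≤ 1 :=
                  max_le (by linarith [h1.2, h2.1]) (by norm_num)
                linarith
              exact pow_le_pow_left₀ (by positivity) hle 2
          _ = (n : ℝ) / 4 := by
              rw [Finset.sum_const, Finset.card_univ, Fintype.card_fin]
              push_cast; ring
      calc Real.sqrt (0 ^ 2 + grad2 f x) ≤ Real.sqrt ((n : ℝ) / 4) := by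
            apply Real.sqrt_le_sqrt; simpa using hg
        _ = Real.sqrt n / 2 := by
            rw [show (n : ℝ) / 4 = (n : ℝ) * (1/2)^2 by ring,
              Real.sqrt_mul (Nat.cast_nonneg n), Real.sqrt_sq (by norm_num : (0:ℝ) ≤ 1/2)]
            ring
    · rw [if_neg hx, hJf]
      have hg : grad2 f x = 0 := by
        unfold grad2
        apply Finset.sum_eq_zero
        intro i _
        have hle : f (flip i x) ≤ f x := by
          by_cases hxS : x ∈ S
          · have := (hf (flip i x)).2
            simp only [hfdef, if_pos hxS]
            linarith
          · have hflip : flip i x ∉ S := fun hc => hx ⟨hxS, ⟨i, hc⟩⟩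
            simp only [hfdef, if_neg hxS, if_neg hflip]
            norm_num
        have : max (f (flip i x) - f x) 0 = 0 := max_eq_right (by linarith)
        rw [this]
        norm_num
      rw [hg]
      simp
  have hRHS : ∑ x, Real.sqrt ((J (f x)) ^ 2 + grad2 f x)
      ≤ (Finset.univ.filter (fun x => x ∉ S ∧ ∃ i, flip i x ∈ S)).card * (Real.sqrt n / 2) := by
    calc ∑ x, Real.sqrt ((J (f x)) ^ 2 + grad2 f x)
        ≤ ∑ x, if x ∉ S ∧ ∃ i, flip i x ∈ S then Real.sqrt n / 2 else 0 :=
          Finset.sum_le_sum fun x _ => hterm x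
      _ = _ := by
          rw [Finset.sum_ite, Finset.sum_const, Finset.sum_const_zero, add_zero,
            nsmul_eq_mul]
  have hLHS : (S.card : ℝ) / 4 ≤ (2 ^ n : ℝ) * J ((∑ x, f x) / 2 ^ n) := by
    rw [hsum]
    unfold J
    have hN : (0:ℝ) < 2 ^ n := by positivity
    have h0 : (0:ℝ) ≤ (S.card : ℝ) := Nat.cast_nonneg _
    have hμ : (S.card : ℝ) / 2 ^ n ≤ 1 / 2 := by
      rw [div_le_div_iff₀ hN (by norm_num)]
      linarith
    have hexp : (2 ^ n : ℝ) * ((S.card : ℝ) / 2 ^ n * (1 - (S.card : ℝ) / 2 ^ n) / 2)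
        = (S.card : ℝ) * (1 - (S.card : ℝ) / 2 ^ n) / 2 := by
      field_simp
    rw [hexp]
    have : (1:ℝ)/2 ≤ 1 - (S.card : ℝ) / 2 ^ n := by linarith
    nlinarith
  have := le_trans hLHS (le_trans hbob hRHS)
  nlinarith [Real.sqrt_nonneg (n:ℝ),
    (Nat.cast_nonneg (α := ℝ) ((Finset.univ.filter (fun x => x ∉ S ∧ ∃ i, flip i x ∈ S)).card))]

/-- Parity of a vector. -/
def par {n : ℕ} (x' : Fin n → ZMod 2) : ZMod 2 := ∑ i, x' i

/-- Embedding of the halved cube into the even side. -/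
def ev {n : ℕ} (x' : Fin n → ZMod 2) : Fin (n + 1) → ZMod 2 := Fin.cons (par x') x'

/-- Embedding of the halved cube into the odd side. -/
def od {n : ℕ} (x' : Fin n → ZMod 2) : Fin (n + 1) → ZMod 2 := Fin.cons (par x' + 1) x'

lemma ev_injective {n : ℕ} : Function.Injective (ev (n := n)) := by
  intro x y h
  have := congrArg Fin.tail h
  simpa [ev, Fin.tail_cons] using this

lemma od_injective {n : ℕ} : Function.Injective (od (n := n)) := by
  intro x y h
  have := congrArg Fin.tail h
  simpa [od, Fin.tail_cons] using this

lemma par_flip {n : ℕ} (i : Fin n) (x : Fin n → ZMod 2) : par (flip i x) = par x + 1 := by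
  unfold par flip
  rw [Finset.sum_update_of_mem (Finset.mem_univ i)]
  rw [show (Finset.univ : Finset (Fin n)) \ {i} = Finset.univ.erase i by
    rw [Finset.erase_eq]]
  rw [← Finset.add_sum_erase _ x (Finset.mem_univ i)]
  ring

lemma flip_flip {n : ℕ} (i : Fin n) (x : Fin n → ZMod 2) : flip i (flip i x) = x := by
  unfold flip
  rw [Function.update_self]
  rw [Function.update_idem]
  have : x i + 1 + 1 = x i := by
    rw [add_assoc, show (1 : ZMod 2) + 1 = 0 by decide, add_zero]
  rw [this, Function.update_eq_self]

end

end CubeIso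

namespace CubeIso

lemma mem_evenSide_iff {n : ℕ} (x : Fin (n + 1) → ZMod 2) :
    x ∈ evenSide (n + 1) ↔ ∃ x', x = ev x' := by
  constructor
  · intro hx
    refine ⟨Fin.tail x, ?_⟩
    have hsum : x 0 + ∑ i : Fin n, x i.succ = 0 := by
      have : ∑ i, x i = 0 := hx
      rwa [Fin.sum_univ_succ] at this
    have h0 : x 0 = par (Fin.tail x) := by
      have hz : ∀ a b : ZMod 2, a + b = 0 → a = b := by decide
      exact hz _ _ hsum
    have : x = Fin.cons (x 0) (Fin.tail x) := (Fin.cons_self_tail x).symm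
    rw [ev, ← h0]
    exact this
  · rintro ⟨x', rfl⟩
    show ∑ i, ev x' i = 0
    rw [ev, Fin.sum_univ_succ]
    simp only [Fin.cons_zero, Fin.cons_succ]
    have : ∀ a : ZMod 2, a + a = 0 := by decide
    exact this (par x')

lemma adj_iff {d : ℕ} (x y : Fin d → ZMod 2) :
    (cubeGraph d).Adj x y ↔ ∃ i, y = flip i x := by
  show hammingDist x y = 1 ↔ _
  rw [show hammingDist x y = (Finset.univ.filter fun i => x i ≠ y i).card from rfl,
    Finset.card_eq_one]
  constructor
  · rintro ⟨i, hi⟩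
    refine ⟨i, funext fun j => ?_⟩
    by_cases hj : j = i
    · subst hj
      have hmem : j ∈ Finset.univ.filter fun i => x i ≠ y i := by
        rw [hi]; exact Finset.mem_singleton_self j
      have hne : x j ≠ y j := (Finset.mem_filter.1 hmem).2
      have : ∀ a b : ZMod 2, a ≠ b → b = a + 1 := by decide
      rw [flip, Function.update_self]
      exact this _ _ hne
    · have hnotmem : j ∉ Finset.univ.filter fun i => x i ≠ y i := by
        rw [hi]
        simpa using hj
      have heq : x j = y j := by
        by_contra hne
        exact hnotmem (Finset.mem_filter.2 ⟨Finset.mem_univ j, hne⟩)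
      rw [flip, Function.update_of_ne hj]
      exact heq.symm
  · rintro ⟨i, rfl⟩
    refine ⟨i, ?_⟩
    ext j
    simp only [Finset.mem_filter, Finset.mem_univ, true_and, Finset.mem_singleton]
    constructor
    · intro hne
      by_contra hj
      rw [flip, Function.update_of_ne hj] at hne
      exact hne rfl
    · rintro rfl
      rw [flip, Function.update_self]
      have : ∀ a : ZMod 2, a ≠ a + 1 := by decide
      exact this _

/-- The Körner–Wei description of the neighbourhood of an even set. -/
lemma nbhd_eq {n : ℕ} (A : Set (Fin (n + 1) → ZMod 2)) (hA : A ⊆ evenSide (n + 1)) :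
    nbhd (cubeGraph (n + 1)) A
      = od '' {x' | ev x' ∈ A ∨ ∃ i, ev (flip i x') ∈ A} := by
  ext y
  constructor
  · rintro ⟨a, haA, hadj⟩
    obtain ⟨s, rfl⟩ := (mem_evenSide_iff a).1 (hA haA)
    obtain ⟨k, rfl⟩ := (adj_iff _ _).1 hadj
    induction k using Fin.cases with
    | zero =>
      rw [show flip (0 : Fin (n+1)) (ev s) = od s from flip_cons_zero (par s) s]
      exact ⟨s, Or.inl haA, rfl⟩
    | succ i =>
      rw [show flip i.succ (ev s) = Fin.cons (par s) (flip i s) from flip_cons_succ (par s) s i]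
      refine ⟨flip i s, Or.inr ⟨i, ?_⟩, ?_⟩
      · rw [flip_flip]
        exact haA
      · rw [od, par_flip]
        congr 1
        rw [add_assoc, show (1 : ZMod 2) + 1 = 0 by decide, add_zero]
  · rintro ⟨x', hx', rfl⟩
    rcases hx' with hS | ⟨i, hfS⟩
    · refine ⟨ev x', hS, ?_⟩
      rw [adj_iff]
      exact ⟨0, (flip_cons_zero (par x') x').symm⟩
    · refine ⟨ev (flip i x'), hfS, ?_⟩
      rw [adj_iff]
      refine ⟨Fin.succ i, ?_⟩
      rw [show flip i.succ (ev (flip i x')) = Fin.cons (par (flip i x')) (flip i (flip i x'))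
        from flip_cons_succ _ _ i]
      rw [flip_flip, od, par_flip]

end CubeIso

/-- isoperimetry in the cube: there is `c > 0` such that for all large `d`
and every nonempty `A ⊆ E` with `|A| ≤ 2^(d-2)`,
`(|N(A)| - |A|)/|N(A)| ≥ c/√d`. -/
theorem cube_isoperimetry :
    ∃ c : ℝ, 0 < c ∧ ∃ d₀ : ℕ, ∀ d ≥ d₀, ∀ A : Set (Fin d → ZMod 2),
      A ⊆ evenSide d → A.Nonempty → A.ncard ≤ 2 ^ (d - 2) →
      (((nbhd (cubeGraph d) A).ncard : ℝ) - A.ncard) / (nbhd (cubeGraph d) A).ncard ≥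
        c / Real.sqrt d := by
  classical
  refine ⟨1/8, by norm_num, 3, ?_⟩
  intro d hd A hAE hAne hAcard
  obtain ⟨n, rfl⟩ : ∃ n, d = n + 1 := ⟨d - 1, by omega⟩
  have hn : 2 ≤ n := by omega
  set S : Finset (Fin n → ZMod 2) := Finset.univ.filter (fun x' => CubeIso.ev x' ∈ A) with hS
  set O : Finset (Fin n → ZMod 2) :=
    Finset.univ.filter (fun x => x ∉ S ∧ ∃ i, CubeIso.flip i x ∈ S) with hO
  have hSset : (S : Set (Fin n → ZMod 2)) = {x' | CubeIso.ev x' ∈ A} := by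
    ext x'; simp [hS]
  have hAimg : A = CubeIso.ev '' (S : Set (Fin n → ZMod 2)) := by
    rw [hSset]
    ext a
    constructor
    · intro ha
      obtain ⟨x', rfl⟩ := (CubeIso.mem_evenSide_iff a).1 (hAE ha)
      exact ⟨x', ha, rfl⟩
    · rintro ⟨x', hx', rfl⟩; exact hx'
  have hAcardS : A.ncard = S.card := by
    rw [hAimg, Set.ncard_image_of_injective _ CubeIso.ev_injective, Set.ncard_coe_finset]
  have hN : nbhd (cubeGraph (n+1)) A
      = CubeIso.od '' ((S : Set (Fin n → ZMod 2)) ∪ (O : Set (Fin n → ZMod 2))) := by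
    rw [CubeIso.nbhd_eq A hAE]
    have hmemS : ∀ x' : Fin n → ZMod 2, x' ∈ S ↔ CubeIso.ev x' ∈ A := by
      intro x'; rw [hS, Finset.mem_filter]; simp
    have hmemO : ∀ x' : Fin n → ZMod 2,
        x' ∈ O ↔ (x' ∉ S ∧ ∃ i, CubeIso.flip i x' ∈ S) := by
      intro x'; rw [hO, Finset.mem_filter]; simp
    have hsets : {x' | CubeIso.ev x' ∈ A ∨ ∃ i, CubeIso.ev (CubeIso.flip i x') ∈ A}
        = (S : Set (Fin n → ZMod 2)) ∪ (O : Set (Fin n → ZMod 2)) := by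
      ext x
      constructor
      · intro hx
        rcases (show CubeIso.ev x ∈ A ∨ ∃ i, CubeIso.ev (CubeIso.flip i x) ∈ A from hx) with
          hx1 | ⟨i, hi⟩
        · exact Set.mem_union_left _ ((hmemS x).2 hx1)
        · by_cases hxS : x ∈ S
          · exact Set.mem_union_left _ hxS
          · exact Set.mem_union_right _ ((hmemO x).2 ⟨hxS, ⟨i, (hmemS _).2 hi⟩⟩)
      · intro hx
        rcases hx with hx | hx
        · exact Or.inl ((hmemS x).1 hx)
        · obtain ⟨hxS, i, hi⟩ := (hmemO x).1 hx
          exact Or.inr ⟨i, (hmemS _).1 hi⟩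
    rw [hsets]
  have hdisj : Disjoint S O := by
    rw [Finset.disjoint_left]
    intro x hxS hxO
    rw [hO, Finset.mem_filter] at hxO
    exact hxO.2.1 hxS
  have hNcard : (nbhd (cubeGraph (n+1)) A).ncard = S.card + O.card := by
    rw [hN, Set.ncard_image_of_injective _ CubeIso.od_injective,
      show (S : Set (Fin n → ZMod 2)) ∪ (O : Set (Fin n → ZMod 2))
        = ((S ∪ O : Finset (Fin n → ZMod 2)) : Set (Fin n → ZMod 2)) by
          rw [Finset.coe_union],
      Set.ncard_coe_finset, Finset.card_union_of_disjoint hdisj]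
  -- the size hypothesis
  have hS2 : (S.card : ℝ) ≤ 2 ^ n / 2 := by
    have h1 : A.ncard ≤ 2 ^ (n - 1) := by
      have : n + 1 - 2 = n - 1 := by omega
      rwa [this] at hAcard
    have h2 : (S.card : ℝ) ≤ (2 : ℝ) ^ (n - 1) := by
      rw [← hAcardS]
      calc (A.ncard : ℝ) ≤ ((2 ^ (n - 1) : ℕ) : ℝ) := Nat.cast_le.2 h1
        _ = (2 : ℝ) ^ (n - 1) := by push_cast; ring
    have h3 : (2 : ℝ) ^ (n - 1) * 2 = 2 ^ n := by
      rw [← pow_succ]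
      congr 1
      omega
    linarith
  have hb := CubeIso.boundary_bound n S hS2
  -- O here is exactly the filter in boundary_bound
  have hbO : (S.card : ℝ) ≤ 2 * Real.sqrt n * O.card := hb
  -- positivity facts
  have hSpos : 1 ≤ S.card := by
    obtain ⟨a, ha⟩ := hAne
    obtain ⟨x', rfl⟩ := (CubeIso.mem_evenSide_iff a).1 (hAE ha)
    have : x' ∈ S := by rw [hS, Finset.mem_filter]; exact ⟨Finset.mem_univ _, ha⟩
    exact Finset.card_pos.2 ⟨x', this⟩
  have hOpos : 1 ≤ O.card := by
    by_contra hO0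
    have : O.card = 0 := by omega
    rw [this] at hbO
    have : (S.card : ℝ) ≤ 0 := by
      simpa using hbO
    have : (1 : ℝ) ≤ 0 := le_trans (by exact_mod_cast hSpos) this
    linarith
  -- final arithmetic
  rw [hNcard, hAcardS, ge_iff_le]
  set s : ℝ := (S.card : ℝ) with hs
  set o : ℝ := (O.card : ℝ) with ho
  have hso : ((S.card + O.card : ℕ) : ℝ) = s + o := by push_cast; ring
  rw [hso]
  have hs1 : (1 : ℝ) ≤ s := by rw [hs]; exact_mod_cast hSpos
  have ho1 : (1 : ℝ) ≤ o := by rw [ho]; exact_mod_cast hOpos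
  have hd1 : (1 : ℝ) ≤ Real.sqrt ((n : ℝ) + 1) := by
    calc (1 : ℝ) = Real.sqrt 1 := Real.sqrt_one.symm
      _ ≤ Real.sqrt ((n : ℝ) + 1) :=
          Real.sqrt_le_sqrt (by have := Nat.cast_nonneg (α := ℝ) n; linarith)
  have hmono : Real.sqrt (n : ℝ) ≤ Real.sqrt ((n : ℝ) + 1) :=
    Real.sqrt_le_sqrt (by linarith)
  have hsq : Real.sqrt (((n : ℕ) + 1 : ℕ) : ℝ) = Real.sqrt ((n : ℝ) + 1) := by
    push_cast; ring_nf
  have hpos : (0 : ℝ) < s + o := by linarith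
  have hrpos : (0 : ℝ) < Real.sqrt ((n : ℝ) + 1) := by linarith
  rw [hsq, div_le_div_iff₀ hrpos hpos]
  have hkey : s + o ≤ 3 * Real.sqrt ((n : ℝ) + 1) * o := by
    have h1 : s ≤ 2 * Real.sqrt ((n : ℝ) + 1) * o := by
      have := hbO
      have h2 : 2 * Real.sqrt (n : ℝ) * o ≤ 2 * Real.sqrt ((n : ℝ) + 1) * o :=
        by nlinarith
      linarith
    nlinarith
  nlinarith
end
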